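/- Let R be a ring and 𝒰_𝒳 the class of 𝒳-injective left R-modules. R is 𝒰_𝒳-hereditary (every left ideal is 𝒰_𝒳-projective) if and only if every submodule of a 𝒰_𝒳-projective R-module is 𝒰_𝒳-projective. -/

import Mathlib

open CategoryTheory Limits Opposite

/-- `Ext^n_R(X, M) = 0`, phrased via the `Ext` bifunctor on `ModuleCat R`. -/
def extZero (R : Type) [Ring R] (n : ℕ) (X M : ModuleCat R) : Prop :=
  IsZero (((Ext ℤ (ModuleCat R) n).obj (op X)).obj M)

/-- `M` is `𝒳`-injective if `Ext¹(X, M) = 0` for every `X ∈ 𝒳`. -/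
def IsXInjective (R : Type) [Ring R] (𝒳 : ModuleCat R → Prop) (M : ModuleCat R) : Prop :=
  ∀ X, 𝒳 X → extZero R 1 X M

/-- `M` is `𝒰_𝒳`-projective if `Ext¹(M, U) = 0` for every `𝒳`-injective module `U`. -/
def IsUXProjective (R : Type) [Ring R] (𝒳 : ModuleCat R → Prop) (M : ModuleCat R) : Prop :=
  ∀ U : ModuleCat R, IsXInjective R 𝒳 U → extZero R 1 M U

section Aux

variable {R : Type} [Ring R]

lemma extZero_one_iff (X U : ModuleCat R) (P : ProjectiveResolution X) :
    extZero R 1 X U ↔ ∀ f : P.complex.X 1 ⟶ U, P.complex.d 2 1 ≫ f = 0 →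
      ∃ g : P.complex.X 0 ⟶ U, P.complex.d 1 0 ≫ g = f := by
  rw [extZero, (P.isoExt 1 U).isZero_iff,
    ← HomologicalComplex.exactAt_iff_isZero_homology,
    HomologicalComplex.exactAt_iff' _ 0 1 2 (by simp) (by simp),
    ShortComplex.moduleCat_exact_iff]
  constructor
  · intro h f hf
    obtain ⟨g, hg⟩ := h f hf
    exact ⟨g, hg⟩
  · intro h f hf
    obtain ⟨g, hg⟩ := h f hf
    exact ⟨g, hg⟩

lemma factor_thru_inj {A U E : ModuleCat R} (i : U ⟶ E) (hi : Function.Injective i)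
    (f : A ⟶ E) (hf : ∀ a, f a ∈ LinearMap.range i.hom) :
    ∃ f' : A ⟶ U, f' ≫ i = f := by
  let e : U ≃ₗ[R] LinearMap.range i.hom := LinearEquiv.ofInjective i.hom hi
  refine ⟨ModuleCat.ofHom ((e.symm.toLinearMap).comp (f.hom.codRestrict (LinearMap.range i.hom) hf)), ?_⟩
  ext a
  show i (e.symm ((f.hom.codRestrict (LinearMap.range i.hom) hf) a)) = f a
  exact LinearEquiv.ofInjective_symm_apply (f := i.hom) (h := hi)
    ((f.hom.codRestrict (LinearMap.range i.hom) hf) a)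

lemma lift_of_extZero {X U E Q' : ModuleCat R} (h : extZero R 1 X U)
    (i : U ⟶ E) (hi : Function.Injective i) (q : E ⟶ Q') (hq : Function.Surjective q)
    (hker : LinearMap.ker q.hom = LinearMap.range i.hom) (φ : X ⟶ Q') :
    ∃ ψ : X ⟶ E, ψ ≫ q = φ := by
  have hiq : i ≫ q = 0 := by
    ext u; exact (LinearMap.mem_ker.mp (hker ▸ LinearMap.mem_range_self i.hom u : i u ∈ LinearMap.ker q.hom))
  obtain ⟨P⟩ := (HasProjectiveResolution.out (Z := X)).some |> fun p => (⟨p⟩ : Nonempty _)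
  haveI : Epi q := (ModuleCat.epi_iff_surjective q).mpr hq
  haveI := P.projective 0
  set π0 : P.complex.X 0 ⟶ X := P.π.f 0 with hπ0
  haveI : Epi π0 := epi_of_isColimit_cofork P.isColimitCokernelCofork
  set ψ0 : P.complex.X 0 ⟶ E := Projective.factorThru (π0 ≫ φ) q with hψ0
  have hfac : ψ0 ≫ q = π0 ≫ φ := Projective.factorThru_comp _ _
  set d10 := P.complex.d 1 0
  set d21 := P.complex.d 2 1
  have hd : d10 ≫ π0 = 0 := P.complex_d_comp_π_f_zero
  have hrange : ∀ y, (d10 ≫ ψ0) y ∈ LinearMap.range i.hom := by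
    intro y
    rw [← hker, LinearMap.mem_ker]
    have : ((d10 ≫ ψ0) ≫ q) y = ((d10 ≫ π0) ≫ φ) y := by
      rw [Category.assoc, hfac, Category.assoc]
    simpa [hd] using this
  obtain ⟨f', hf'⟩ := factor_thru_inj i hi (d10 ≫ ψ0) hrange
  have hd21 : d21 ≫ f' = 0 := by
    have : (d21 ≫ f') ≫ i = 0 := by
      rw [Category.assoc, hf', ← Category.assoc, HomologicalComplex.d_comp_d, zero_comp]
    have h2 : ∀ y, i (f' (d21 y)) = 0 := fun y => by
      simpa using congrArg (fun (t : P.complex.X 2 ⟶ E) => t y) this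
    ext y
    apply hi
    simpa [show (0 : P.complex.X 2 ⟶ U) y = 0 from rfl] using h2 y
  obtain ⟨g, hg⟩ := (extZero_one_iff X U P).mp h f' hd21
  have hzero : d10 ≫ (ψ0 - g ≫ i) = 0 := by
    rw [Preadditive.comp_sub, ← Category.assoc, hg, hf', sub_self]
  obtain ⟨ψ, hψ⟩ := CokernelCofork.IsColimit.desc' P.isColimitCokernelCofork (ψ0 - g ≫ i) hzero
  refine ⟨ψ, ?_⟩
  have : π0 ≫ ψ ≫ q = π0 ≫ φ := by
    refine (Category.assoc π0 ψ q).symm.trans ?_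
    have hψ' : π0 ≫ ψ = ψ0 - g ≫ i := hψ
    rw [hψ', Preadditive.sub_comp, Category.assoc, hiq, comp_zero, sub_zero, hfac]
  exact (cancel_epi π0).mp this

lemma forward_step (𝒳 : ModuleCat R → Prop)
    (hI : ∀ I : Ideal R, IsUXProjective R 𝒳 (ModuleCat.of R (↥I)))
    (M : Type) [AddCommGroup M] [Module R M]
    (hM : IsUXProjective R 𝒳 (ModuleCat.of R M)) (N : Submodule R M) :
    IsUXProjective R 𝒳 (ModuleCat.of R (↥N)) := by
  intro U hU
  -- injective envelope of U
  let E : ModuleCat R := Injective.under U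
  let i : U ⟶ E := Injective.ι U
  have hi : Function.Injective i := (ModuleCat.mono_iff_injective i).mp inferInstance
  let Q' : ModuleCat R := ModuleCat.of R (↥E ⧸ LinearMap.range i.hom)
  let q : E ⟶ Q' := ModuleCat.ofHom (LinearMap.range i.hom).mkQ
  have hq : Function.Surjective q := Submodule.mkQ_surjective _
  have hker : LinearMap.ker q.hom = LinearMap.range i.hom := Submodule.ker_mkQ _
  have hiq : ∀ u, q (i u) = 0 := by
    intro u
    exact LinearMap.mem_ker.mp (hker ▸ LinearMap.mem_range_self i.hom u : i u ∈ LinearMap.ker q.hom)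
  -- E is module-injective
  haveI : CategoryTheory.Injective (ModuleCat.of R ↥E) := by
    rw [ModuleCat.of_coe]; infer_instance
  have hEmod : Module.Injective R ↥E := Module.injective_module_of_injective_object R ↥E
  -- Q' is module-injective, by Baer's criterion and the hypothesis on ideals
  have hQmod : Module.Injective R ↥Q' := by
    refine Module.Baer.injective ?_
    intro I g
    obtain ⟨ψ, hψ⟩ := lift_of_extZero (hI I U hU) i hi q hq hker
      (show ModuleCat.of R ↥I ⟶ Q' from ModuleCat.ofHom g)
    obtain ⟨h', hh'⟩ := hEmod.out I.subtype (Submodule.injective_subtype I)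
      (show ↥I →ₗ[R] ↥E from ψ.hom)
    refine ⟨q.hom.comp h', fun x hx => ?_⟩
    have := hh' ⟨x, hx⟩
    calc q (h' x) = q (ψ ⟨x, hx⟩) := by rw [show h' x = ψ ⟨x, hx⟩ from this]
    _ = g ⟨x, hx⟩ := congrArg (fun (t : ModuleCat.of R ↥I ⟶ Q') => t ⟨x, hx⟩) hψ
  -- now prove extZero R 1 (of R ↥N) U via the criterion
  obtain ⟨P⟩ := (HasProjectiveResolution.out (Z := ModuleCat.of R ↥N)).some
    |> fun p => (⟨p⟩ : Nonempty _)
  rw [extZero_one_iff _ U P]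
  intro f' hf'
  set π0 : P.complex.X 0 ⟶ ModuleCat.of R ↥N := P.π.f 0 with hπ0
  set d10 := P.complex.d 1 0
  set d21 := P.complex.d 2 1
  have hdπ : d10 ≫ π0 = 0 := P.complex_d_comp_π_f_zero
  -- f' kills ker d10
  have hrk : LinearMap.range d21.hom
      = LinearMap.ker d10.hom :=
    (ShortComplex.moduleCat_exact_iff_range_eq_ker _).mp (P.exact_succ 0)
  have hkerf : LinearMap.ker d10.hom
      ≤ LinearMap.ker f'.hom := by
    rw [← hrk]
    rintro _ ⟨y, rfl⟩
    exact congrArg (fun (t : P.complex.X 2 ⟶ U) => t y) hf'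
  -- factor f' through K := range d10
  let fbar : (LinearMap.range d10.hom) →ₗ[R] U :=
    ((LinearMap.ker d10.hom).liftQ f'.hom hkerf).comp
      (d10.hom.quotKerEquivRange.symm.toLinearMap)
  have hfbar : ∀ y : P.complex.X 1,
      fbar ⟨d10 y, LinearMap.mem_range_self _ y⟩ = f' y := by
    intro y
    have h1 := d10.hom.quotKerEquivRange_symm_apply_image y
      (LinearMap.mem_range_self _ y)
    simp only [fbar, LinearMap.comp_apply, LinearEquiv.coe_coe, h1]
    simp [Submodule.mkQ_apply]
  -- extend i ∘ fbar to e0 : P0 →ₗ E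
  obtain ⟨e0, he0⟩ := hEmod.out
    (LinearMap.range d10.hom).subtype
    (Submodule.injective_subtype _) (i.hom.comp fbar)
  -- q ∘ e0 kills range d10, hence factors through N
  have hd0 : d10 ≫ ((ModuleCat.ofHom e0) ≫ q) = 0 := by
    ext y
    have := he0 ⟨d10 y, LinearMap.mem_range_self _ y⟩
    show q (e0 (d10 y)) = 0
    rw [show e0 (d10 y) = i (fbar ⟨d10 y, LinearMap.mem_range_self _ y⟩) from this]
    exact hiq _
  obtain ⟨n0, hn0⟩ := CokernelCofork.IsColimit.desc' P.isColimitCokernelCofork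
    ((ModuleCat.ofHom e0) ≫ q) hd0
  -- extend n0 to M using injectivity of Q'
  obtain ⟨n', hn'⟩ := hQmod.out N.subtype (Submodule.injective_subtype N)
    (show ↥N →ₗ[R] ↥Q' from n0.hom)
  -- lift n' along q using that M is UX-projective
  obtain ⟨mt, hmt⟩ := lift_of_extZero (hM U hU) i hi q hq hker
    (show ModuleCat.of R M ⟶ Q' from ModuleCat.ofHom n')
  -- the correction term
  let ι : ModuleCat.of R ↥N ⟶ ModuleCat.of R M := ModuleCat.ofHom N.subtype
  have hmem : ∀ a, ((ModuleCat.ofHom e0) - π0 ≫ ι ≫ mt) a ∈ LinearMap.range i.hom := by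
    intro a
    rw [← hker, LinearMap.mem_ker]
    have h1 : q (mt (ι (π0 a))) = n' (ι (π0 a)) :=
      congrArg (fun (t : ModuleCat.of R M ⟶ Q') => t (ι (π0 a))) hmt
    have h2 : n' (ι (π0 a)) = n0 (π0 a) := hn' (π0 a)
    have h4 : n0 (π0 a) = q (e0 a) :=
      congrArg (fun (t : P.complex.X 0 ⟶ Q') => t a) hn0
    show q (e0 a - mt (ι (π0 a))) = 0
    rw [map_sub, h1, h2, h4, sub_self]
  obtain ⟨g, hg⟩ := factor_thru_inj i hi ((ModuleCat.ofHom e0) - π0 ≫ ι ≫ mt) hmem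
  refine ⟨g, ?_⟩
  ext y
  apply hi
  have hgy : i (g (d10 y)) = e0 (d10 y) - mt (ι (π0 (d10 y))) :=
    congrArg (fun (t : P.complex.X 0 ⟶ E) => t (d10 y)) hg
  have hπ0d : π0 (d10 y) = 0 := by
    have := congrArg (fun (t : P.complex.X 1 ⟶ ModuleCat.of R ↥N) => t y) hdπ
    simpa using this
  show i ((d10 ≫ g) y) = i (f' y)
  have : i (g (d10 y)) = i (f' y) := by
    rw [hgy, hπ0d, map_zero, map_zero, sub_zero,
      show e0 (d10 y) = i (fbar ⟨d10 y, LinearMap.mem_range_self _ y⟩) from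
        he0 ⟨d10 y, LinearMap.mem_range_self _ y⟩,
      hfbar]
  exact this

end Aux

/-- `R` is `𝒰_𝒳`-hereditary (every left ideal is `𝒰_𝒳`-projective) iff every submodule of a
`𝒰_𝒳`-projective module is `𝒰_𝒳`-projective. -/
theorem stmt6 (R : Type) [Ring R] (𝒳 : ModuleCat R → Prop) :
    (∀ I : Ideal R, IsUXProjective R 𝒳 (ModuleCat.of R (↥I))) ↔
      (∀ (M : Type) [AddCommGroup M] [Module R M],
        IsUXProjective R 𝒳 (ModuleCat.of R M) →
          ∀ N : Submodule R M, IsUXProjective R 𝒳 (ModuleCat.of R (↥N))) := by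
  constructor
  · intro hI M _ _ hM N
    exact forward_step 𝒳 hI M hM N
  · intro h I
    haveI : Projective (ModuleCat.of R R) :=
      (IsProjective.iff_projective (R := R) (P := R)).mp inferInstance
    have hR : IsUXProjective R 𝒳 (ModuleCat.of R R) :=
      fun U _ => isZero_Ext_succ_of_projective (ModuleCat.of R R) U 0
    exact h R hR I
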